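/- Let k ≥ 1 be an integer and L > 0 a real number. Then the series ∑_{n=0}^∞ (1/√(n!))·√(Γ(2k·n/(2k+1) + 1))·L^{n/(2k)} converges, where Γ is the (real) Gamma function. (This series majorizes, uniformly for y in a compact interval [0,L], the eigenfunction expansion w(y,τ) = ∑_β e^{−βτ/(2k+1)}·M_β(u₀)·ψ_β(y) of the rescaled solution of the linear dispersion equation.) -/

import Mathlib

open Real Filter

/-- Log-convexity bound: `Γ(c n + 1) ≤ (n!)^c` for `c ∈ [0,1]`. -/
lemma gamma_le_fact_rpow (c : ℝ) (hc0 : 0 ≤ c) (hc1 : c ≤ 1) (n : ℕ) :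
    Real.Gamma (c * n + 1) ≤ (n.factorial : ℝ) ^ c := by
  have h1 : (1 : ℝ) ∈ Set.Ioi (0 : ℝ) := by norm_num
  have h2 : ((n : ℝ) + 1) ∈ Set.Ioi (0 : ℝ) := Set.mem_Ioi.mpr (by positivity)
  have hconv := Real.convexOn_log_Gamma.2 h1 h2 (by linarith : (0:ℝ) ≤ 1 - c) hc0 (by ring)
  simp only [smul_eq_mul, Function.comp_apply] at hconv
  have harg : (1 - c) * 1 + c * ((n : ℝ) + 1) = c * n + 1 := by ring
  rw [harg, Real.Gamma_one, Real.log_one, mul_zero, zero_add] at hconv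
  have hGn1 : Real.Gamma ((n : ℝ) + 1) = (n.factorial : ℝ) :=
    Real.Gamma_nat_eq_factorial n
  rw [hGn1] at hconv
  have hpos : 0 < Real.Gamma (c * n + 1) := Real.Gamma_pos_of_pos (by positivity)
  have hfpos : (0 : ℝ) < (n.factorial : ℝ) := by positivity
  calc Real.Gamma (c * n + 1) = Real.exp (Real.log (Real.Gamma (c * n + 1))) :=
        (Real.exp_log hpos).symm
    _ ≤ Real.exp (c * Real.log (n.factorial : ℝ)) := Real.exp_le_exp.mpr hconv
    _ = (n.factorial : ℝ) ^ c := by rw [Real.rpow_def_of_pos hfpos, mul_comm]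

/-- For every integer `k ≥ 1` and real `L > 0`, the majorizing series
`∑ₙ (1/√(n!))·√(Γ(2kn/(2k+1) + 1))·L^(n/(2k))` converges. -/
theorem stmt19 (k : ℕ) (hk : 1 ≤ k) (L : ℝ) (hL : 0 < L) :
    Summable (fun n : ℕ =>
      (1 / Real.sqrt (Nat.factorial n)) *
        Real.sqrt (Real.Gamma (2 * (k : ℝ) * (n : ℝ) / (2 * (k : ℝ) + 1) + 1)) *
        L ^ ((n : ℝ) / (2 * (k : ℝ)))) := by
  have hk1 : (1 : ℝ) ≤ (k : ℝ) := by exact_mod_cast hk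
  set c : ℝ := 2 * k / (2 * k + 1) with hc
  have hden : (0 : ℝ) < 2 * k + 1 := by linarith
  have hc0 : 0 ≤ c := by positivity
  have hc1 : c ≤ 1 := by rw [hc, div_le_one hden]; linarith
  have hclt : c < 1 := by rw [hc, div_lt_one hden]; linarith
  set δ : ℝ := (c - 1) / 2 with hδ
  have hδneg : δ < 0 := by rw [hδ]; linarith
  set R : ℝ := L ^ ((2 * (k : ℝ))⁻¹) with hR
  have hRpos : 0 < R := Real.rpow_pos_of_pos hL _
  set b : ℕ → ℝ := fun n => (n.factorial : ℝ) ^ δ * R ^ n with hb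
  have hbpos : ∀ n, 0 < b n := fun n => by
    have : (0:ℝ) < (n.factorial : ℝ) := by positivity
    positivity
  have hbsum : Summable b := by
    apply summable_of_ratio_test_tendsto_lt_one one_pos
      (Filter.Eventually.of_forall fun n => (hbpos n).ne')
    have hratio : ∀ n : ℕ, ‖b (n + 1)‖ / ‖b n‖ = ((n:ℝ) + 1) ^ δ * R := by
      intro n
      have hfp : (0:ℝ) < (n.factorial : ℝ) := by positivity
      rw [Real.norm_of_nonneg (hbpos _).le, Real.norm_of_nonneg (hbpos _).le, hb]
      simp only
      rw [Nat.factorial_succ, Nat.cast_mul, Real.mul_rpow (by positivity) hfp.le,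
        pow_succ]
      push_cast
      field_simp
    simp only [hratio]
    have h1 : Filter.Tendsto (fun n : ℕ => ((n:ℝ) + 1) ^ δ) atTop (nhds 0) := by
      have := (tendsto_rpow_neg_atTop (by linarith : (0:ℝ) < -δ)).comp
        (tendsto_atTop_add_const_right atTop (1:ℝ) tendsto_natCast_atTop_atTop)
      simpa [neg_neg, Function.comp_def] using this
    have := h1.mul_const R
    simpa using this
  apply Summable.of_nonneg_of_le _ _ hbsum
  · intro n
    have h1 : 0 ≤ Real.sqrt (Nat.factorial n : ℝ) := Real.sqrt_nonneg _
    positivity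
  · intro n
    have hfp : (0:ℝ) < (n.factorial : ℝ) := by positivity
    have hG : Real.Gamma (2 * (k : ℝ) * (n : ℝ) / (2 * (k : ℝ) + 1) + 1)
        ≤ (n.factorial : ℝ) ^ c := by
      have := gamma_le_fact_rpow c hc0 hc1 n
      have harg : c * (n : ℝ) + 1 = 2 * (k : ℝ) * (n : ℝ) / (2 * (k : ℝ) + 1) + 1 := by
        rw [hc]; field_simp
      rwa [harg] at this
    have hsqG : Real.sqrt (Real.Gamma (2 * (k : ℝ) * (n : ℝ) / (2 * (k : ℝ) + 1) + 1))
        ≤ (n.factorial : ℝ) ^ (c / 2) := by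
      have h2 : Real.sqrt ((n.factorial : ℝ) ^ c) = (n.factorial : ℝ) ^ (c / 2) := by
        rw [Real.sqrt_eq_rpow, ← Real.rpow_mul hfp.le]
        ring_nf
      calc Real.sqrt (Real.Gamma (2 * (k : ℝ) * (n : ℝ) / (2 * (k : ℝ) + 1) + 1))
          ≤ Real.sqrt ((n.factorial : ℝ) ^ c) := Real.sqrt_le_sqrt hG
        _ = (n.factorial : ℝ) ^ (c / 2) := h2
    have hLR : L ^ ((n : ℝ) / (2 * (k : ℝ))) = R ^ n := by
      rw [hR, ← Real.rpow_natCast (L ^ ((2 * (k:ℝ))⁻¹)) n, ← Real.rpow_mul hL.le]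
      congr 1
      field_simp
    have hsf : 1 / Real.sqrt (n.factorial : ℝ) = (n.factorial : ℝ) ^ (-(1/2) : ℝ) := by
      rw [Real.sqrt_eq_rpow, one_div, ← Real.rpow_neg hfp.le]
    calc (1 / Real.sqrt (Nat.factorial n)) *
        Real.sqrt (Real.Gamma (2 * (k : ℝ) * (n : ℝ) / (2 * (k : ℝ) + 1) + 1)) *
        L ^ ((n : ℝ) / (2 * (k : ℝ)))
        = (n.factorial : ℝ) ^ (-(1/2) : ℝ) *
          Real.sqrt (Real.Gamma (2 * (k : ℝ) * (n : ℝ) / (2 * (k : ℝ) + 1) + 1)) * R ^ n := by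
          rw [hLR, hsf]
      _ ≤ (n.factorial : ℝ) ^ (-(1/2) : ℝ) * (n.factorial : ℝ) ^ (c / 2) * R ^ n := by
          have h0 : (0:ℝ) ≤ (n.factorial : ℝ) ^ (-(1/2) : ℝ) := by positivity
          have h3 : (0:ℝ) ≤ R ^ n := by positivity
          gcongr
      _ = b n := by
          rw [hb]
          simp only
          rw [← Real.rpow_add hfp]
          congr 1
          rw [hδ]; ring
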